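/- If f: ℝⁿ → ℝ is differentiable with L-Lipschitz gradient, and the iterates satisfy x_{k+1} = x_k - (1/L)∇f(x_k), then for each N ≥ 1, min_{0 ≤ k ≤ N-1} ‖∇f(x_k)‖ ≤ sqrt(2L(f(x_0) - f(x_*))/N), where x_* is a global minimizer of f. -/

import Mathlib

open scoped RealInnerProductSpace

lemma descent_aux {n : ℕ} (f : EuclideanSpace ℝ (Fin n) → ℝ) (L : ℝ) (hL : 0 < L)
    (hdiff : Differentiable ℝ f)
    (hlip : ∀ x y, ‖gradient f x - gradient f y‖ ≤ L * ‖x - y‖)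
    (x v : EuclideanSpace ℝ (Fin n)) :
    f (x + v) ≤ f x + ⟪gradient f x, v⟫ + L / 2 * ‖v‖ ^ 2 := by
  have hgradcont : Continuous (gradient f) := by
    refine LipschitzWith.continuous (K := ⟨L, hL.le⟩) ?_
    refine LipschitzWith.of_dist_le_mul fun a b => ?_
    rw [dist_eq_norm, dist_eq_norm]; exact hlip a b
  set c : ℝ → EuclideanSpace ℝ (Fin n) := fun t => x + t • v with hc
  have hcderiv : ∀ t : ℝ, HasDerivAt c v t := fun t => by
    have h := ((hasDerivAt_id t).smul_const v).const_add x
    rw [one_smul] at h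
    exact h
  have hgderiv : ∀ t : ℝ, HasDerivAt (fun s => f (c s)) ⟪gradient f (c t), v⟫ t := by
    intro t
    have hF : HasFDerivAt f (InnerProductSpace.toDual ℝ _ (gradient f (c t))) (c t) :=
      (hdiff (c t)).hasGradientAt.hasFDerivAt
    have h := hF.comp_hasDerivAt t (hcderiv t)
    rw [InnerProductSpace.toDual_apply_apply] at h
    exact h
  have hcont : Continuous fun t : ℝ => ⟪gradient f (c t), v⟫ := by
    exact (hgradcont.comp (continuous_const.add (continuous_id.smul continuous_const))).inner
      continuous_const
  have hint : ∫ t in (0:ℝ)..1, ⟪gradient f (c t), v⟫ = f (x + v) - f x := by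
    have := intervalIntegral.integral_eq_sub_of_hasDerivAt
      (f := fun s => f (c s)) (f' := fun t => ⟪gradient f (c t), v⟫)
      (a := (0:ℝ)) (b := 1) (fun t _ => hgderiv t) (hcont.intervalIntegrable 0 1)
    simpa [hc] using this
  have hbound : ∀ t ∈ Set.Icc (0:ℝ) 1,
      ⟪gradient f (c t), v⟫ ≤ ⟪gradient f x, v⟫ + L * t * ‖v‖ ^ 2 := by
    intro t ht
    have h1 : ⟪gradient f (c t), v⟫ - ⟪gradient f x, v⟫
        = ⟪gradient f (c t) - gradient f x, v⟫ := by
      rw [inner_sub_left]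
    have h2 : ⟪gradient f (c t) - gradient f x, v⟫ ≤ ‖gradient f (c t) - gradient f x‖ * ‖v‖ :=
      real_inner_le_norm _ _
    have h3 : ‖gradient f (c t) - gradient f x‖ ≤ L * (t * ‖v‖) := by
      have := hlip (c t) x
      simpa [hc, norm_smul, abs_of_nonneg ht.1] using this
    nlinarith [norm_nonneg v, mul_le_mul_of_nonneg_right h3 (norm_nonneg v)]
  have hintle : ∫ t in (0:ℝ)..1, ⟪gradient f (c t), v⟫
      ≤ ∫ t in (0:ℝ)..1, (⟪gradient f x, v⟫ + L * t * ‖v‖ ^ 2) := by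
    have hcont2 : Continuous fun t : ℝ => ⟪gradient f x, v⟫ + L * t * ‖v‖ ^ 2 :=
      continuous_const.add ((continuous_const.mul continuous_id).mul continuous_const)
    exact intervalIntegral.integral_mono_on (by norm_num)
      (hcont.intervalIntegrable 0 1) (hcont2.intervalIntegrable 0 1) hbound
  have hval : ∫ t in (0:ℝ)..1, (⟪gradient f x, v⟫ + L * t * ‖v‖ ^ 2)
      = ⟪gradient f x, v⟫ + L / 2 * ‖v‖ ^ 2 := by
    have h1 : Continuous fun _ : ℝ => ⟪gradient f x, v⟫ := continuous_const
    have h2 : Continuous fun t : ℝ => L * t * ‖v‖ ^ 2 :=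
      (continuous_const.mul continuous_id).mul continuous_const
    rw [intervalIntegral.integral_add (h1.intervalIntegrable 0 1) (h2.intervalIntegrable 0 1)]
    have h3 : (fun t : ℝ => L * t * ‖v‖ ^ 2) = fun t : ℝ => (L * ‖v‖ ^ 2) * t := by
      funext t; ring
    rw [h3, intervalIntegral.integral_const_mul, integral_id,
      intervalIntegral.integral_const]
    simp; ring
  linarith [hint ▸ (hval ▸ hintle)]

theorem stmt0 {n : ℕ} (f : EuclideanSpace ℝ (Fin n) → ℝ) (L : ℝ) (hL : 0 < L)
    (hdiff : Differentiable ℝ f)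
    (hlip : ∀ x y, ‖gradient f x - gradient f y‖ ≤ L * ‖x - y‖)
    (xstar : EuclideanSpace ℝ (Fin n)) (hmin : ∀ y, f xstar ≤ f y)
    (x : ℕ → EuclideanSpace ℝ (Fin n))
    (hstep : ∀ k, x (k + 1) = x k - (1 / L) • gradient f (x k)) :
    ∀ N : ℕ, 1 ≤ N → ∃ k < N,
      ‖gradient f (x k)‖ ≤ Real.sqrt (2 * L * (f (x 0) - f xstar) / N) := by
  have hdec : ∀ k, f (x (k + 1)) ≤ f (x k) - 1 / (2 * L) * ‖gradient f (x k)‖ ^ 2 := by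
    intro k
    set g := gradient f (x k) with hg
    have hxk : x (k + 1) = x k + (-(1 / L)) • g := by
      rw [hstep k, neg_smul, sub_eq_add_neg]
    have hdes := descent_aux f L hL hdiff hlip (x k) ((-(1 / L)) • g)
    rw [← hxk] at hdes
    have hinner : ⟪g, (-(1 / L)) • g⟫ = -(1 / L) * ‖g‖ ^ 2 := by
      rw [real_inner_smul_right, real_inner_self_eq_norm_sq]
    have hnorm : ‖(-(1 / L)) • g‖ ^ 2 = (1 / L) ^ 2 * ‖g‖ ^ 2 := by
      rw [norm_smul]; rw [mul_pow]; congr 1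
      rw [Real.norm_eq_abs, abs_neg, abs_of_nonneg (by positivity), sq]
    rw [hinner, hnorm] at hdes
    have : L / 2 * ((1 / L) ^ 2 * ‖g‖ ^ 2) - (1 / L) * ‖g‖ ^ 2
        = -(1 / (2 * L)) * ‖g‖ ^ 2 := by
      field_simp; ring
    nlinarith [hdes]
  have hsum : ∀ N : ℕ, ∑ k ∈ Finset.range N, 1 / (2 * L) * ‖gradient f (x k)‖ ^ 2
      ≤ f (x 0) - f (x N) := by
    intro N
    induction N with
    | zero => simp
    | succ N ih =>
      rw [Finset.sum_range_succ]
      have := hdec N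
      linarith
  intro N hN
  obtain ⟨k, hkmem, hkmin⟩ := Finset.exists_min_image (Finset.range N)
    (fun k => ‖gradient f (x k)‖) ⟨0, Finset.mem_range.mpr hN⟩
  refine ⟨k, Finset.mem_range.mp hkmem, ?_⟩
  have hNle : (N : ℝ) * (1 / (2 * L) * ‖gradient f (x k)‖ ^ 2)
      ≤ ∑ j ∈ Finset.range N, 1 / (2 * L) * ‖gradient f (x j)‖ ^ 2 := by
    have := Finset.card_nsmul_le_sum (Finset.range N)
      (fun j => 1 / (2 * L) * ‖gradient f (x j)‖ ^ 2)
      (1 / (2 * L) * ‖gradient f (x k)‖ ^ 2) (fun j hj =>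
        mul_le_mul_of_nonneg_left
          (pow_le_pow_left₀ (norm_nonneg _) (hkmin j hj) 2) (by positivity))
    simpa [nsmul_eq_mul] using this
  have hfx : f (x 0) - f (x N) ≤ f (x 0) - f xstar := by linarith [hmin (x N)]
  have hkey : (N : ℝ) * (1 / (2 * L) * ‖gradient f (x k)‖ ^ 2) ≤ f (x 0) - f xstar :=
    le_trans hNle (le_trans (hsum N) hfx)
  have hNpos : (0:ℝ) < N := by exact_mod_cast hN
  have hsq : ‖gradient f (x k)‖ ^ 2 ≤ 2 * L * (f (x 0) - f xstar) / N := by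
    rw [le_div_iff₀ hNpos]
    have h2L : (0:ℝ) < 2 * L := by linarith
    calc ‖gradient f (x k)‖ ^ 2 * N = 2 * L * ((N:ℝ) * (1 / (2 * L) * ‖gradient f (x k)‖ ^ 2)) := by
          field_simp
      _ ≤ 2 * L * (f (x 0) - f xstar) := by nlinarith
  calc ‖gradient f (x k)‖ = Real.sqrt (‖gradient f (x k)‖ ^ 2) := by
        rw [Real.sqrt_sq (norm_nonneg _)]
    _ ≤ Real.sqrt (2 * L * (f (x 0) - f xstar) / N) := Real.sqrt_le_sqrt hsq
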